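/- Let 0 < t < 1 and let y₁ > y₂ > ... > y_N be real numbers such that any two consecutive nonzero y's of the same sign satisfy y_{i+1}/y_i ≤ t (and y_i may have different signs, positives first). Assume moreover y_{i+1} ≤ t y_i whenever y_i > 0 and y_{i-1} ≥ t^{-1} y_i whenever both are defined (i.e., in logarithmic scale the gaps are ≥ log(1/t)). Then for each i, the products ∏_{k<i}(y_k - t^{±1} y_i) · ∏_{l>i}(t^{±1} y_i - y_l) are nonnegative; equivalently, (S^±_{t,i} V_N)(Y)/V_N(Y) ≥ 0 where V_N(Y) = ∏_{j<k}(y_j - y_k) > 0. -/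
import Mathlib

/-- If `a ≤ t * b` with `t > 0`, then `t⁻¹ * a ≤ b`. -/
lemma scale_le_aux (t a b : ℝ) (ht : 0 < t) (h : a ≤ t * b) : t⁻¹ * a ≤ b := by
  have := mul_le_mul_of_nonneg_left h (inv_nonneg.mpr ht.le)
  rwa [← mul_assoc, inv_mul_cancel₀ ht.ne', one_mul] at this

/-- Sign condition on Vandermonde ratios: for a strictly decreasing configuration
`y₁ > ... > y_N` whose consecutive coordinates satisfy `y_{i+1} ≤ t·y_i` and
`y_{i+1} ≤ t⁻¹·y_i` (the q-lattice gap conditions), one has `V_N(Y) > 0` and, for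
each `i` and each `ε ∈ {t, t⁻¹}`, `∏_{k<i}(y_k - ε y_i) · ∏_{l>i}(ε y_i - y_l) ≥ 0`. -/
theorem vandermonde_ratio_nonneg
    (t : ℝ) (ht : 0 < t) (ht1 : t < 1) (N : ℕ)
    (y : Fin N → ℝ)
    (hdec : ∀ i j : Fin N, i < j → y j < y i)
    (hgap : ∀ i : Fin N, ∀ h : (i : ℕ) + 1 < N,
      y ⟨(i : ℕ) + 1, h⟩ ≤ t * y i ∧ y ⟨(i : ℕ) + 1, h⟩ ≤ t⁻¹ * y i) :
    0 < (∏ i : Fin N, ∏ j ∈ Finset.Ioi i, (y i - y j)) ∧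
    ∀ i : Fin N,
      (0 ≤ (∏ k ∈ Finset.Iio i, (y k - t * y i)) * ∏ l ∈ Finset.Ioi i, (t * y i - y l)) ∧
      (0 ≤ (∏ k ∈ Finset.Iio i, (y k - t⁻¹ * y i)) * ∏ l ∈ Finset.Ioi i, (t⁻¹ * y i - y l)) := by
  have htinv : 0 < t⁻¹ := inv_pos.mpr ht
  refine ⟨Finset.prod_pos fun i _ => Finset.prod_pos fun j hj =>
      sub_pos.mpr (hdec i j (Finset.mem_Ioi.mp hj)), ?_⟩
  intro i
  have left : ∀ k ∈ Finset.Iio i, t * y i ≤ y k ∧ t⁻¹ * y i ≤ y k := by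
    intro k hk
    have hki0 : k < i := Finset.mem_Iio.mp hk
    have hki : (k : ℕ) < (i : ℕ) := hki0
    have hiN : (i : ℕ) < N := i.isLt
    have hi1 : 1 ≤ (i : ℕ) := by omega
    have hlt : (i : ℕ) - 1 < N := by omega
    obtain ⟨h1, h2⟩ := hgap ⟨(i : ℕ) - 1, hlt⟩ (by simpa using by omega : ((i : ℕ) - 1) + 1 < N)
    simp only [Nat.sub_add_cancel hi1, Fin.eta] at h1 h2
    have hyp : y ⟨(i : ℕ) - 1, hlt⟩ ≤ y k := by
      rcases eq_or_lt_of_le (show k ≤ (⟨(i : ℕ) - 1, hlt⟩ : Fin N) from by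
        simp only [Fin.le_def, Fin.val_mk]; omega) with h | h
      · rw [h]
      · exact le_of_lt (hdec k _ h)
    constructor
    · have := scale_le_aux t⁻¹ (y i) (y ⟨(i : ℕ) - 1, hlt⟩) htinv h2
      rw [inv_inv] at this
      linarith
    · have := scale_le_aux t (y i) (y ⟨(i : ℕ) - 1, hlt⟩) ht h1
      linarith
  have right : ∀ l ∈ Finset.Ioi i, y l ≤ t * y i ∧ y l ≤ t⁻¹ * y i := by
    intro l hl
    have hil0 : i < l := Finset.mem_Ioi.mp hl
    have hil : (i : ℕ) < (l : ℕ) := hil0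
    have hN : (i : ℕ) + 1 < N := lt_of_le_of_lt hil l.isLt
    obtain ⟨h1, h2⟩ := hgap i hN
    have hyl : y l ≤ y ⟨(i : ℕ) + 1, hN⟩ := by
      rcases eq_or_lt_of_le (show (⟨(i : ℕ) + 1, hN⟩ : Fin N) ≤ l from by
        simp only [Fin.le_def, Fin.val_mk]; omega) with h | h
      · rw [h]
      · exact le_of_lt (hdec _ l h)
    exact ⟨le_trans hyl h1, le_trans hyl h2⟩
  constructor
  · exact mul_nonneg
      (Finset.prod_nonneg fun k hk => by linarith [(left k hk).1])
      (Finset.prod_nonneg fun l hl => by linarith [(right l hl).1])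
  · exact mul_nonneg
      (Finset.prod_nonneg fun k hk => by linarith [(left k hk).2])
      (Finset.prod_nonneg fun l hl => by linarith [(right l hl).2])
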